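/- Let (H,G) be a Standard Basis for a fractional ideal I of O. Then the set v(H) = {v(h) : h ∈ H} generates v(I) as a semimodule over the semiring (Γ, inf, +): for every nonzero f ∈ I there exist s ≥ 1, γ_1,…,γ_s ∈ Γ and h_1,…,h_s ∈ H such that v(f) = inf{γ_1 + v(h_1), …, γ_s + v(h_s)}. In particular, v(I) is a finitely generated Γ-semimodule. -/

import Mathlib

noncomputable section
open PowerSeries

/-- Coefficient-wise definition of the continuous substitution homomorphism
`X_j ↦ x j` from multivariate power series to power series (each `x j` having
zero constant coefficient). -/
def psiFun {K : Type*} [CommRing K] {n : ℕ} (x : Fin n → PowerSeries K)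
    (F : MvPowerSeries (Fin n) K) : PowerSeries K :=
  PowerSeries.mk fun m =>
    PowerSeries.coeff (R := K) m (∑ e : Fin n → Fin (m + 1),
      MvPowerSeries.coeff (R := K) (Finsupp.equivFunOnFinite.symm fun j => (e j : ℕ)) F •
        ∏ j, x j ^ ((e j : ℕ)))

/-- The data of an `n`-space algebroid curve with `r` branches: for each branch a
vector of power series (the parameterization), all with zero constant coefficient,
such that the kernels of the associated substitution maps (the primes `P i`)
are pairwise distinct. -/
structure CurveData (K : Type*) [Field K] (r n : ℕ) where
  x : Fin n → Fin r → PowerSeries K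
  const_coeff_zero : ∀ j i, PowerSeries.constantCoeff (R := K) (x j i) = 0
  primes_distinct : ∀ i i' : Fin r, i ≠ i' →
    {F : MvPowerSeries (Fin n) K | psiFun (fun j => x j i) F = 0} ≠
      {F : MvPowerSeries (Fin n) K | psiFun (fun j => x j i') F = 0}

variable {K : Type*} [Field K] {r n : ℕ}

/-- The substitution homomorphism `ψ` with values in the total quotient ring
`⊕ K((t_i))`. -/
def CurveData.psi (D : CurveData K r n) (F : MvPowerSeries (Fin n) K) :
    Fin r → LaurentSeries K :=
  fun i => (psiFun (fun j => D.x j i) F : LaurentSeries K)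

/-- The local ring `O` of the curve, viewed inside `⊕ K((t_i))`. -/
def CurveData.O (D : CurveData K r n) : Set (Fin r → LaurentSeries K) :=
  Set.range D.psi

open Classical in
/-- The order valuation on Laurent series, with `v(0) = ∞`. -/
def lOrd {K : Type*} [Field K] (f : LaurentSeries K) : WithTop ℤ :=
  if f = 0 then ⊤ else (f.order : WithTop ℤ)

/-- The value vector `v(h) = (v_1(h_1), …, v_r(h_r))`. -/
def vv {K : Type*} [Field K] {r : ℕ} (h : Fin r → LaurentSeries K) : Fin r → WithTop ℤ :=
  fun i => lOrd (h i)

/-- The semiring of values `Γ = v(O)`. -/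
def CurveData.Gamma (D : CurveData K r n) : Set (Fin r → WithTop ℤ) := vv '' D.O

/-- The maximal ideal `M` of `O` (elements of `O` all of whose components have
positive order). -/
def CurveData.Mset (D : CurveData K r n) : Set (Fin r → LaurentSeries K) :=
  {g | g ∈ D.O ∧ ∀ i, 0 < lOrd (g i)}

/-- `I` is a fractional ideal of `O`: a finitely generated `O`-submodule of
`⊕ K((t_i))` containing an element all of whose components are nonzero. -/
def CurveData.IsFracIdeal (D : CurveData K r n) (I : Set (Fin r → LaurentSeries K)) : Prop :=
  (∃ B : Finset (Fin r → LaurentSeries K),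
    I = {f | ∃ a : (Fin r → LaurentSeries K) → (Fin r → LaurentSeries K),
      (∀ b ∈ B, a b ∈ D.O) ∧ f = ∑ b ∈ B, a b * b}) ∧
  ∃ h ∈ I, ∀ i, h i ≠ 0

/-- A `G`-product `G^α = ∏_{g ∈ G} g^{α_g}`. -/
def Gprod {K : Type*} [Field K] {r : ℕ} (G : Finset (Fin r → LaurentSeries K))
    (α : (Fin r → LaurentSeries K) → ℕ) : Fin r → LaurentSeries K :=
  ∏ g ∈ G, g ^ α g

/-- `f'` is a `k`-reduction of `f` modulo `(H, G)`. -/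
def IsKRed {K : Type*} [Field K] {r : ℕ} (G H : Finset (Fin r → LaurentSeries K)) (k : Fin r)
    (f f' : Fin r → LaurentSeries K) : Prop :=
  lOrd (f k) ≠ ⊤ ∧
  ∃ (c : K) (α : (Fin r → LaurentSeries K) → ℕ) (h : Fin r → LaurentSeries K),
    h ∈ H ∧ f' = f - c • (Gprod G α * h) ∧
    (∀ i, lOrd (f i) ≤ lOrd (f' i)) ∧ lOrd (f k) < lOrd (f' k)

/-- `f'` is a reduction of `f` modulo `(H, G)`. -/
def IsRed {K : Type*} [Field K] {r : ℕ} (G H : Finset (Fin r → LaurentSeries K))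
    (f f' : Fin r → LaurentSeries K) : Prop :=
  ∃ k, IsKRed G H k f f'

/-- `(H, G)` is a Standard Basis for the fractional ideal `I`. -/
def IsSB {K : Type*} [Field K] {r n : ℕ} (D : CurveData K r n)
    (G H : Finset (Fin r → LaurentSeries K)) (I : Set (Fin r → LaurentSeries K)) : Prop :=
  ↑G ⊆ D.Mset \ {0} ∧ ↑H ⊆ I \ {0} ∧
  ∀ f ∈ I, f ≠ 0 → ∃ f', IsRed G H f f'

/-- `G` is a Standard Basis for the local ring `O`. -/
def IsSBO {K : Type*} [Field K] {r n : ℕ} (D : CurveData K r n)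
    (G : Finset (Fin r → LaurentSeries K)) : Prop :=
  IsSB D G {1} D.O

/-- `f` is an `S_k`-process of the pair `(h₁, h₂)` of `H` over `G`. -/
def IsSProc {K : Type*} [Field K] {r : ℕ} (G H : Finset (Fin r → LaurentSeries K)) (k : Fin r)
    (c₁ c₂ : K) (α₁ α₂ : (Fin r → LaurentSeries K) → ℕ)
    (h₁ h₂ f : Fin r → LaurentSeries K) : Prop :=
  h₁ ∈ H ∧ h₂ ∈ H ∧ f = c₁ • (Gprod G α₁ * h₁) + c₂ • (Gprod G α₂ * h₂) ∧
  min (lOrd ((Gprod G α₁ * h₁) k)) (lOrd ((Gprod G α₂ * h₂) k)) < lOrd (f k)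


/-! ### Auxiliary lemmas: the order function `lOrd` -/

namespace SB8

variable {K : Type*} [Field K]

theorem lOrd_eq_orderTop (f : LaurentSeries K) : lOrd f = f.orderTop := by
  by_cases h : f = 0
  · simp [lOrd, h]
  · rw [lOrd, if_neg h, HahnSeries.order_eq_orderTop_of_ne_zero h]

@[simp] theorem lOrd_zero : lOrd (0 : LaurentSeries K) = ⊤ := by simp [lOrd]

theorem lOrd_eq_top_iff {f : LaurentSeries K} : lOrd f = ⊤ ↔ f = 0 := by
  rw [lOrd_eq_orderTop, HahnSeries.orderTop_eq_top]

theorem lOrd_mul (a b : LaurentSeries K) : lOrd (a * b) = lOrd a + lOrd b := by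
  by_cases ha : a = 0
  · simp [ha]
  by_cases hb : b = 0
  · simp [hb]
  have hab : a * b ≠ 0 := mul_ne_zero ha hb
  rw [lOrd, if_neg hab, lOrd, if_neg ha, lOrd, if_neg hb,
    HahnSeries.order_mul ha hb]
  push_cast
  rfl

theorem min_le_lOrd_add {a b : LaurentSeries K} :
    min (lOrd a) (lOrd b) ≤ lOrd (a + b) := by
  rw [lOrd_eq_orderTop, lOrd_eq_orderTop, lOrd_eq_orderTop]
  exact HahnSeries.min_orderTop_le_orderTop_add

theorem min_le_lOrd_sub {a b : LaurentSeries K} :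
    min (lOrd a) (lOrd b) ≤ lOrd (a - b) := by
  rw [sub_eq_add_neg]
  have : lOrd (-b) = lOrd b := by
    rw [lOrd_eq_orderTop, lOrd_eq_orderTop]; exact HahnSeries.orderTop_neg
  rw [← this]
  exact min_le_lOrd_add

theorem lOrd_sub_eq_left {a b : LaurentSeries K} (h : lOrd a < lOrd b) :
    lOrd (a - b) = lOrd a := by
  rw [lOrd_eq_orderTop, lOrd_eq_orderTop] at h
  rw [lOrd_eq_orderTop, lOrd_eq_orderTop]
  exact HahnSeries.orderTop_sub h

theorem lOrd_le_lOrd_smul (c : K) (x : LaurentSeries K) : lOrd x ≤ lOrd (c • x) := by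
  by_cases h : c • x = 0
  · simp [h]
  have hx : x ≠ 0 := by rintro rfl; simp at h
  have h1 : (c • x).coeff (c • x).order ≠ 0 := by
    have := HahnSeries.coeff_orderTop_ne (x := c • x) (g := (c • x).order)
      (HahnSeries.order_eq_orderTop_of_ne_zero h).symm
    exact this
  have h2 : x.coeff (c • x).order ≠ 0 := by
    intro hh
    apply h1
    rw [HahnSeries.coeff_smul, hh, smul_zero]
  calc lOrd x ≤ ((c • x).order : WithTop ℤ) := by
        rw [lOrd_eq_orderTop]; exact HahnSeries.orderTop_le_of_coeff_ne_zero h2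
    _ = lOrd (c • x) := by rw [lOrd, if_neg h]

theorem lOrd_smul_of_ne_zero {c : K} (hc : c ≠ 0) (x : LaurentSeries K) :
    lOrd (c • x) = lOrd x := by
  refine le_antisymm ?_ (lOrd_le_lOrd_smul c x)
  have := lOrd_le_lOrd_smul c⁻¹ (c • x)
  rwa [inv_smul_smul₀ hc] at this

theorem coeff_eq_zero_of_lt_lOrd {x : LaurentSeries K} {i : ℤ}
    (h : (i : WithTop ℤ) < lOrd x) : x.coeff i = 0 := by
  rw [lOrd_eq_orderTop] at h
  exact HahnSeries.coeff_eq_zero_of_lt_orderTop h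

theorem le_lOrd_of_forall {x : LaurentSeries K} {t : WithTop ℤ}
    (h : ∀ i : ℤ, (i : WithTop ℤ) < t → x.coeff i = 0) : t ≤ lOrd x := by
  by_contra hc
  push_neg at hc
  have hx : x ≠ 0 := by
    rintro rfl
    simp at hc
  have hord : lOrd x = (x.order : WithTop ℤ) := by rw [lOrd, if_neg hx]
  have h1 : x.coeff x.order = 0 := by
    apply h
    rw [← hord]; exact hc
  have h2 : x.coeff x.order ≠ 0 := by
    refine HahnSeries.coeff_orderTop_ne ?_
    rw [← lOrd_eq_orderTop, hord]
  exact h2 h1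

theorem eq_zero_of_forall_le_lOrd {x : LaurentSeries K}
    (h : ∀ t : ℤ, (t : WithTop ℤ) ≤ lOrd x) : x = 0 := by
  by_contra hx
  have hord : lOrd x = (x.order : WithTop ℤ) := by rw [lOrd, if_neg hx]
  have := h (x.order + 1)
  rw [hord] at this
  have : (x.order : ℤ) + 1 ≤ x.order := by exact_mod_cast this
  omega

theorem le_lOrd_sum {ι : Type*} (S : Finset ι) (y : ι → LaurentSeries K) {t : WithTop ℤ}
    (h : ∀ b ∈ S, t ≤ lOrd (y b)) : t ≤ lOrd (∑ b ∈ S, y b) := by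
  classical
  induction S using Finset.induction_on with
  | empty => simp
  | @insert a s ha ih =>
    rw [Finset.sum_insert ha]
    refine le_trans ?_ min_le_lOrd_add
    exact le_min (h a (Finset.mem_insert_self a s))
      (ih fun b hb => h b (Finset.mem_insert_of_mem hb))

end SB8

/-! ### Auxiliary: `psiFun` is a ring homomorphism -/

namespace SB8

variable {K : Type*} [Field K] {n : ℕ}

/-- exponent function to finsupp -/
def tF {m : ℕ} (e : Fin n → Fin m) : Fin n →₀ ℕ :=
  Finsupp.equivFunOnFinite.symm fun j => (e j : ℕ)

@[simp] theorem tF_apply {m : ℕ} (e : Fin n → Fin m) (j : Fin n) : tF e j = (e j : ℕ) := rfl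

/-- total degree of an exponent -/
def degF (d : Fin n →₀ ℕ) : ℕ := ∑ j, d j

theorem degF_add (d d' : Fin n →₀ ℕ) : degF (d + d') = degF d + degF d' := by
  simp [degF, Finsupp.add_apply, Finset.sum_add_distrib]

theorem apply_le_degF (d : Fin n →₀ ℕ) (j : Fin n) : d j ≤ degF d :=
  Finset.single_le_sum (fun _ _ => Nat.zero_le _) (Finset.mem_univ j)

/-- `F` has all coefficients of total degree `< k` zero. -/
def LowZero (k : ℕ) (F : MvPowerSeries (Fin n) K) : Prop :=
  ∀ d : Fin n →₀ ℕ, degF d < k → MvPowerSeries.coeff (R := K) d F = 0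

theorem coeff_psiFun (x : Fin n → PowerSeries K) (F : MvPowerSeries (Fin n) K) (m : ℕ) :
    PowerSeries.coeff (R := K) m (psiFun x F) =
      ∑ e : Fin n → Fin (m + 1),
        MvPowerSeries.coeff (R := K) (tF e) F * PowerSeries.coeff (R := K) m (∏ j, x j ^ ((e j : ℕ))) := by
  rw [psiFun, PowerSeries.coeff_mk, map_sum]
  refine Finset.sum_congr rfl fun e _ => ?_
  rw [tF]
  rw [← smul_eq_mul, ← LinearMap.map_smul]

variable (x : Fin n → PowerSeries K)

theorem coeff_prod_pow_eq_zero (hx : ∀ j, PowerSeries.constantCoeff (R := K) (x j) = 0) {m : ℕ} {d : Fin n → ℕ} (hd : m < ∑ j, d j) :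
    PowerSeries.coeff (R := K) m (∏ j, x j ^ d j) = 0 := by
  have hdvd : (PowerSeries.X : PowerSeries K) ^ (∑ j, d j) ∣ ∏ j, x j ^ d j := by
    rw [← Finset.prod_pow_eq_pow_sum]
    exact Finset.prod_dvd_prod_of_dvd _ _ fun j _ =>
      pow_dvd_pow_of_dvd (PowerSeries.X_dvd_iff.2 (hx j)) _
  obtain ⟨w, hw⟩ := hdvd
  rw [hw, PowerSeries.coeff_X_pow_mul', if_neg (by omega)]

theorem psiFun_monomial (hx : ∀ j, PowerSeries.constantCoeff (R := K) (x j) = 0) (d : Fin n →₀ ℕ) (c : K) :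
    psiFun x (MvPowerSeries.monomial (R := K) d c) = c • ∏ j, x j ^ d j := by
  ext m
  rw [coeff_psiFun, PowerSeries.coeff_smul, smul_eq_mul]
  by_cases hdm : ∀ j, d j ≤ m
  · set e₀ : Fin n → Fin (m + 1) := fun j => (⟨d j, by have := hdm j; omega⟩ : Fin (m + 1))
      with he₀def
    have he₀ : tF e₀ = d := by
      ext j
      simp [he₀def]
    rw [Finset.sum_eq_single e₀]
    · rw [MvPowerSeries.coeff_monomial, if_pos he₀]
    · intro e _ hne
      rw [MvPowerSeries.coeff_monomial, if_neg, zero_mul]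
      intro hEq
      apply hne
      funext j
      have h1 : tF e j = d j := by rw [hEq]
      simp only [tF_apply] at h1
      have h2 : (e₀ j : ℕ) = d j := rfl
      ext
      omega
    · intro h
      exact absurd (Finset.mem_univ _) h
  · push_neg at hdm
    obtain ⟨j₀, hj₀⟩ := hdm
    rw [coeff_prod_pow_eq_zero x hx (lt_of_lt_of_le hj₀ (apply_le_degF d j₀)), mul_zero]
    refine Finset.sum_eq_zero fun e _ => ?_
    rw [MvPowerSeries.coeff_monomial, if_neg, zero_mul]
    intro hEq
    have h1 : (e j₀ : ℕ) = d j₀ := by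
      have : tF e j₀ = d j₀ := by rw [hEq]
      simpa using this
    have := (e j₀).isLt
    omega

theorem psiFun_add (x : Fin n → PowerSeries K) (F G : MvPowerSeries (Fin n) K) :
    psiFun x (F + G) = psiFun x F + psiFun x G := by
  ext m
  rw [map_add, coeff_psiFun, coeff_psiFun, coeff_psiFun, ← Finset.sum_add_distrib]
  refine Finset.sum_congr rfl fun e _ => ?_
  rw [map_add, add_mul]

theorem psiFun_smul (x : Fin n → PowerSeries K) (c : K) (F : MvPowerSeries (Fin n) K) :
    psiFun x (c • F) = c • psiFun x F := by
  ext m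
  rw [PowerSeries.coeff_smul, coeff_psiFun, coeff_psiFun, smul_eq_mul, Finset.mul_sum]
  refine Finset.sum_congr rfl fun e _ => ?_
  rw [MvPowerSeries.coeff_smul]
  ring

/-- `psiFun` as a linear map. -/
def psiLin (x : Fin n → PowerSeries K) : MvPowerSeries (Fin n) K →ₗ[K] PowerSeries K where
  toFun := psiFun x
  map_add' := psiFun_add x
  map_smul' := psiFun_smul x

@[simp] theorem psiLin_apply (x : Fin n → PowerSeries K) (F : MvPowerSeries (Fin n) K) :
    psiLin x F = psiFun x F := rfl

theorem psiFun_sub (x : Fin n → PowerSeries K) (F G : MvPowerSeries (Fin n) K) :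
    psiFun x (F - G) = psiFun x F - psiFun x G :=
  map_sub (psiLin x) F G

/-- truncation: the part of `F` with all exponents `< k`. -/
def lowPoly (k : ℕ) (F : MvPowerSeries (Fin n) K) : MvPowerSeries (Fin n) K :=
  ∑ e : Fin n → Fin k, MvPowerSeries.monomial (R := K) (tF e) (MvPowerSeries.coeff (R := K) (tF e) F)

theorem coeff_lowPoly (k : ℕ) (F : MvPowerSeries (Fin n) K) (d : Fin n →₀ ℕ) :
    MvPowerSeries.coeff (R := K) d (lowPoly k F) =
      if ∀ j, d j < k then MvPowerSeries.coeff (R := K) d F else 0 := by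
  rw [lowPoly, map_sum]
  by_cases hd : ∀ j, d j < k
  · rw [if_pos hd]
    set e₀ : Fin n → Fin k := fun j => (⟨d j, hd j⟩ : Fin k) with he₀def
    have he₀ : tF e₀ = d := by
      ext j
      simp [he₀def]
    rw [Finset.sum_eq_single e₀]
    · rw [MvPowerSeries.coeff_monomial, if_pos he₀.symm, he₀]
    · intro e _ hne
      rw [MvPowerSeries.coeff_monomial, if_neg]
      intro hEq
      apply hne
      funext j
      have h1 : d j = tF e j := by rw [hEq]
      simp only [tF_apply] at h1
      have h2 : (e₀ j : ℕ) = d j := rfl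
      ext
      omega
    · intro h
      exact absurd (Finset.mem_univ _) h
  · rw [if_neg hd]
    push_neg at hd
    obtain ⟨j₀, hj₀⟩ := hd
    refine Finset.sum_eq_zero fun e _ => ?_
    rw [MvPowerSeries.coeff_monomial, if_neg]
    intro hEq
    have h1 : d j₀ = (e j₀ : ℕ) := by
      have : d j₀ = tF e j₀ := by rw [hEq]
      simpa using this
    have := (e j₀).isLt
    omega

theorem lowZero_sub_lowPoly (k : ℕ) (F : MvPowerSeries (Fin n) K) :
    LowZero k (F - lowPoly k F) := by
  intro d hd
  rw [map_sub, coeff_lowPoly, if_pos, sub_self]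
  intro j
  exact lt_of_le_of_lt (apply_le_degF d j) hd

theorem lowZero_mul_right (k : ℕ) (F G : MvPowerSeries (Fin n) K) (hG : LowZero k G) :
    LowZero k (F * G) := by
  classical
  intro d hd
  rw [MvPowerSeries.coeff_mul]
  refine Finset.sum_eq_zero fun p hp => ?_
  rw [Finset.HasAntidiagonal.mem_antidiagonal] at hp
  have : degF p.2 ≤ degF d := by
    rw [← hp, degF_add]; omega
  rw [hG p.2 (by omega), mul_zero]

theorem lowZero_mul_left (k : ℕ) (F G : MvPowerSeries (Fin n) K) (hF : LowZero k F) :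
    LowZero k (F * G) := by
  classical
  intro d hd
  rw [MvPowerSeries.coeff_mul]
  refine Finset.sum_eq_zero fun p hp => ?_
  rw [Finset.HasAntidiagonal.mem_antidiagonal] at hp
  have : degF p.1 ≤ degF d := by
    rw [← hp, degF_add]; omega
  rw [hF p.1 (by omega), zero_mul]

theorem coeff_psiFun_eq_zero_of_lowZero (hx : ∀ j, PowerSeries.constantCoeff (R := K) (x j) = 0) {k : ℕ} {F : MvPowerSeries (Fin n) K}
    (hF : LowZero k F) {m : ℕ} (hm : m < k) :
    PowerSeries.coeff (R := K) m (psiFun x F) = 0 := by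
  rw [coeff_psiFun]
  refine Finset.sum_eq_zero fun e _ => ?_
  by_cases he : ∑ j, (e j : ℕ) ≤ m
  · have : degF (tF e) < k := by
      have : degF (tF e) = ∑ j, (e j : ℕ) := by
        rw [degF]
        refine Finset.sum_congr rfl fun j _ => ?_
        simp
      omega
    rw [hF _ this, zero_mul]
  · rw [coeff_prod_pow_eq_zero x hx (by omega), mul_zero]

theorem psiFun_monomial_mul (hx : ∀ j, PowerSeries.constantCoeff (R := K) (x j) = 0) (d d' : Fin n →₀ ℕ) (c c' : K) :
    psiFun x (MvPowerSeries.monomial (R := K) d c * MvPowerSeries.monomial (R := K) d' c') =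
      psiFun x (MvPowerSeries.monomial (R := K) d c) * psiFun x (MvPowerSeries.monomial (R := K) d' c') := by
  rw [MvPowerSeries.monomial_mul_monomial, psiFun_monomial x hx, psiFun_monomial x hx,
    psiFun_monomial x hx]
  rw [smul_mul_smul_comm]
  congr 1
  rw [← Finset.prod_mul_distrib]
  refine Finset.prod_congr rfl fun j _ => ?_
  rw [Finsupp.add_apply, pow_add]

theorem psiFun_lowPoly_mul (hx : ∀ j, PowerSeries.constantCoeff (R := K) (x j) = 0) (k : ℕ) (F G : MvPowerSeries (Fin n) K) :
    psiFun x (lowPoly k F * lowPoly k G) = psiFun x (lowPoly k F) * psiFun x (lowPoly k G) := by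
  simp only [lowPoly, Finset.sum_mul_sum, ← psiLin_apply, map_sum]
  refine Finset.sum_congr rfl fun e _ => Finset.sum_congr rfl fun e' _ => ?_
  simp only [psiLin_apply]
  exact psiFun_monomial_mul x hx _ _ _ _

theorem psiFun_mul (hx : ∀ j, PowerSeries.constantCoeff (R := K) (x j) = 0) (F G : MvPowerSeries (Fin n) K) :
    psiFun x (F * G) = psiFun x F * psiFun x G := by
  ext m
  set k := m + 1 with hk
  set P := lowPoly k F with hP
  set Q := lowPoly k G with hQ
  have hR : LowZero k (F - P) := lowZero_sub_lowPoly k F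
  have hS : LowZero k (G - Q) := lowZero_sub_lowPoly k G
  have key : F * G = P * Q + (F * (G - Q) + (F - P) * Q) := by ring
  rw [key, psiFun_add, psiFun_add, map_add, map_add,
    coeff_psiFun_eq_zero_of_lowZero x hx (lowZero_mul_right k F (G - Q) hS) (by omega),
    coeff_psiFun_eq_zero_of_lowZero x hx (lowZero_mul_left k (F - P) Q hR) (by omega),
    add_zero, add_zero, psiFun_lowPoly_mul x hx]
  have hF : psiFun x F = psiFun x P + psiFun x (F - P) := by
    rw [← psiFun_add]; congr 1; ring
  have hG : psiFun x G = psiFun x Q + psiFun x (G - Q) := by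
    rw [← psiFun_add]; congr 1; ring
  rw [hF, hG]
  have expand : (psiFun x P + psiFun x (F - P)) * (psiFun x Q + psiFun x (G - Q)) =
      psiFun x P * psiFun x Q + ((psiFun x P + psiFun x (F - P)) * psiFun x (G - Q)
        + psiFun x (F - P) * psiFun x Q) := by ring
  rw [expand, map_add, map_add]
  have z1 : PowerSeries.coeff (R := K) m ((psiFun x P + psiFun x (F - P)) * psiFun x (G - Q)) = 0 := by
    rw [PowerSeries.coeff_mul]
    refine Finset.sum_eq_zero fun p hp => ?_
    rw [Finset.HasAntidiagonal.mem_antidiagonal] at hp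
    rw [coeff_psiFun_eq_zero_of_lowZero x hx hS (by omega), mul_zero]
  have z2 : PowerSeries.coeff (R := K) m (psiFun x (F - P) * psiFun x Q) = 0 := by
    rw [PowerSeries.coeff_mul]
    refine Finset.sum_eq_zero fun p hp => ?_
    rw [Finset.HasAntidiagonal.mem_antidiagonal] at hp
    rw [coeff_psiFun_eq_zero_of_lowZero x hx hR (by omega), zero_mul]
  rw [z1, z2, add_zero, add_zero]

theorem psiFun_one (hx : ∀ j, PowerSeries.constantCoeff (R := K) (x j) = 0) : psiFun x (1 : MvPowerSeries (Fin n) K) = 1 := by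
  have h1 : (1 : MvPowerSeries (Fin n) K) = MvPowerSeries.monomial (R := K) 0 1 := by
    rw [MvPowerSeries.monomial_zero_eq_C, map_one]
  rw [h1, psiFun_monomial x hx]
  simp

theorem psiFun_C (hx : ∀ j, PowerSeries.constantCoeff (R := K) (x j) = 0) (c : K) : psiFun x (MvPowerSeries.C (σ := Fin n) (R := K) c) = PowerSeries.C (R := K) c := by
  have h1 : (MvPowerSeries.C (σ := Fin n) (R := K) c) = MvPowerSeries.monomial (R := K) 0 c := by
    rw [MvPowerSeries.monomial_zero_eq_C]
  rw [h1, psiFun_monomial x hx]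
  simp only [Finsupp.coe_zero, Pi.zero_apply, pow_zero, Finset.prod_const_one]
  rw [PowerSeries.smul_eq_C_mul, mul_one]

/-- `psiFun` as a ring homomorphism. -/
def psiRing (hx : ∀ j, PowerSeries.constantCoeff (R := K) (x j) = 0) : MvPowerSeries (Fin n) K →+* PowerSeries K where
  toFun := psiFun x
  map_one' := psiFun_one x hx
  map_mul' := psiFun_mul x hx
  map_zero' := by
    have := psiFun_smul x (0 : K) 0
    simpa using this
  map_add' := psiFun_add x

@[simp] theorem psiRing_apply (hx : ∀ j, PowerSeries.constantCoeff (R := K) (x j) = 0) (F : MvPowerSeries (Fin n) K) : psiRing x hx F = psiFun x F := rfl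


end SB8

/-! ### Auxiliary: curve-level structures -/

namespace SB8

set_option synthInstance.maxHeartbeats 1000000

variable {K : Type*} [Field K] {r n : ℕ}

instance : IsScalarTower K (LaurentSeries K) (LaurentSeries K) :=
  ⟨fun c x y => by
    show (c • x) * y = c • (x * y)
    rw [← HahnSeries.C_mul_eq_smul, ← HahnSeries.C_mul_eq_smul, mul_assoc]⟩

/-- the vector-level substitution as a ring homomorphism -/
def DpsiRing (D : CurveData K r n) : MvPowerSeries (Fin n) K →+* (Fin r → LaurentSeries K) :=
  Pi.ringHom fun i => (HahnSeries.ofPowerSeries ℤ K).comp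
    (psiRing (fun j => D.x j i) (fun j => D.const_coeff_zero j i))

theorem DpsiRing_apply (D : CurveData K r n) (F : MvPowerSeries (Fin n) K) :
    DpsiRing D F = D.psi F := rfl

theorem mem_O_psi (D : CurveData K r n) (F : MvPowerSeries (Fin n) K) : D.psi F ∈ D.O :=
  Set.mem_range_self F

theorem mem_O_mul (D : CurveData K r n) {a b : Fin r → LaurentSeries K}
    (ha : a ∈ D.O) (hb : b ∈ D.O) : a * b ∈ D.O := by
  obtain ⟨F, rfl⟩ := ha
  obtain ⟨G, rfl⟩ := hb
  exact ⟨F * G, by rw [← DpsiRing_apply, map_mul]; rfl⟩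

theorem mem_O_add (D : CurveData K r n) {a b : Fin r → LaurentSeries K}
    (ha : a ∈ D.O) (hb : b ∈ D.O) : a + b ∈ D.O := by
  obtain ⟨F, rfl⟩ := ha
  obtain ⟨G, rfl⟩ := hb
  exact ⟨F + G, by rw [← DpsiRing_apply, map_add]; rfl⟩

theorem psi_smul (D : CurveData K r n) (c : K) (F : MvPowerSeries (Fin n) K) :
    D.psi (c • F) = c • D.psi F := by
  funext i
  show ((psiFun (fun j => D.x j i) (c • F) : PowerSeries K) : LaurentSeries K) = _
  rw [psiFun_smul]
  exact PowerSeries.coe_smul c _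

theorem mem_O_smul (D : CurveData K r n) (c : K) {a : Fin r → LaurentSeries K}
    (ha : a ∈ D.O) : c • a ∈ D.O := by
  obtain ⟨F, rfl⟩ := ha
  exact ⟨c • F, psi_smul D c F⟩

theorem mem_O_one (D : CurveData K r n) : (1 : Fin r → LaurentSeries K) ∈ D.O :=
  ⟨1, by rw [← DpsiRing_apply, map_one]⟩

theorem mem_O_zero (D : CurveData K r n) : (0 : Fin r → LaurentSeries K) ∈ D.O :=
  ⟨0, by rw [← DpsiRing_apply, map_zero]⟩

theorem psi_add (D : CurveData K r n) (F G : MvPowerSeries (Fin n) K) :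
    D.psi (F + G) = D.psi F + D.psi G := by
  rw [← DpsiRing_apply, map_add]
  rfl

open Classical in
/-- a choice of preimage under `psi` -/
noncomputable def preO (D : CurveData K r n) (v : Fin r → LaurentSeries K) :
    MvPowerSeries (Fin n) K :=
  if h : v ∈ D.O then h.choose else 0

open Classical in
theorem psi_preO (D : CurveData K r n) {v : Fin r → LaurentSeries K} (hv : v ∈ D.O) :
    D.psi (preO D v) = v := by
  rw [preO, dif_pos hv]
  exact hv.choose_spec

theorem mem_O_Gprod (D : CurveData K r n) {G : Finset (Fin r → LaurentSeries K)}
    (hG : ∀ g ∈ G, g ∈ D.O) (α : (Fin r → LaurentSeries K) → ℕ) : Gprod G α ∈ D.O := by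
  refine ⟨∏ g ∈ G, preO D g ^ α g, ?_⟩
  rw [← DpsiRing_apply, map_prod]
  rw [Gprod]
  refine Finset.prod_congr rfl fun g hg => ?_
  rw [map_pow, DpsiRing_apply, psi_preO D (hG g hg)]

/-- the set of a fractional-ideal presentation -/
def ISet (D : CurveData K r n) (B : Finset (Fin r → LaurentSeries K)) :
    Set (Fin r → LaurentSeries K) :=
  {f | ∃ a : (Fin r → LaurentSeries K) → (Fin r → LaurentSeries K),
      (∀ b ∈ B, a b ∈ D.O) ∧ f = ∑ b ∈ B, a b * b}

/-- the fractional ideal as a `K`-submodule -/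
def ISub (D : CurveData K r n) (B : Finset (Fin r → LaurentSeries K)) :
    Submodule K (Fin r → LaurentSeries K) where
  carrier := ISet D B
  add_mem' := by
    rintro v w ⟨a, ha, rfl⟩ ⟨a', ha', rfl⟩
    refine ⟨a + a', fun b hb => mem_O_add D (ha b hb) (ha' b hb), ?_⟩
    rw [← Finset.sum_add_distrib]
    refine Finset.sum_congr rfl fun b _ => ?_
    show a b * b + a' b * b = (a b + a' b) * b
    rw [add_mul]
  zero_mem' := by
    refine ⟨0, fun b _ => mem_O_zero D, ?_⟩
    simp
  smul_mem' := by
    rintro c v ⟨a, ha, rfl⟩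
    refine ⟨fun b => c • a b, fun b hb => mem_O_smul D c (ha b hb), ?_⟩
    rw [Finset.smul_sum]
    refine Finset.sum_congr rfl fun b _ => ?_
    rw [smul_mul_assoc]

theorem mem_ISub_iff (D : CurveData K r n) (B : Finset (Fin r → LaurentSeries K))
    (v : Fin r → LaurentSeries K) : v ∈ ISub D B ↔ v ∈ ISet D B := Iff.rfl

theorem mul_mem_ISub (D : CurveData K r n) (B : Finset (Fin r → LaurentSeries K))
    {o v : Fin r → LaurentSeries K} (ho : o ∈ D.O) (hv : v ∈ ISub D B) :
    o * v ∈ ISub D B := by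
  obtain ⟨a, ha, rfl⟩ := hv
  refine ⟨fun b => o * a b, fun b hb => mem_O_mul D ho (ha b hb), ?_⟩
  rw [Finset.mul_sum]
  refine Finset.sum_congr rfl fun b _ => ?_
  rw [mul_assoc]

/-- the filtration submodule `V_k`: combinations with coefficients of order `≥ k` -/
def SubV (D : CurveData K r n) (B : Finset (Fin r → LaurentSeries K)) (k : ℕ) :
    Submodule K (Fin r → LaurentSeries K) where
  carrier := {y | ∃ φ : (Fin r → LaurentSeries K) → MvPowerSeries (Fin n) K,
    (∀ b ∈ B, LowZero k (φ b)) ∧ y = ∑ b ∈ B, D.psi (φ b) * b}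
  add_mem' := by
    rintro v w ⟨φ, hφ, rfl⟩ ⟨φ', hφ', rfl⟩
    refine ⟨φ + φ', fun b hb d hd => ?_, ?_⟩
    · show MvPowerSeries.coeff (R := K) d (φ b + φ' b) = 0
      rw [map_add, hφ b hb d hd, hφ' b hb d hd, add_zero]
    · rw [← Finset.sum_add_distrib]
      refine Finset.sum_congr rfl fun b _ => ?_
      show D.psi (φ b) * b + D.psi (φ' b) * b = D.psi (φ b + φ' b) * b
      rw [psi_add, add_mul]
  zero_mem' := by
    refine ⟨0, fun b _ d _ => ?_, ?_⟩
    · show MvPowerSeries.coeff (R := K) d (0 : MvPowerSeries (Fin n) K) = 0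
      rw [map_zero]
    · have : ∀ b : Fin r → LaurentSeries K, D.psi ((0 : (Fin r → LaurentSeries K) →
          MvPowerSeries (Fin n) K) b) * b = 0 := by
        intro b
        show D.psi 0 * b = 0
        rw [← DpsiRing_apply, map_zero, zero_mul]
      rw [Finset.sum_congr rfl fun b _ => this b, Finset.sum_const]
      simp
  smul_mem' := by
    rintro c v ⟨φ, hφ, rfl⟩
    refine ⟨fun b => c • φ b, fun b hb d hd => ?_, ?_⟩
    · rw [MvPowerSeries.coeff_smul, hφ b hb d hd]
      simp
    · rw [Finset.smul_sum]
      refine Finset.sum_congr rfl fun b _ => ?_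
      rw [psi_smul, smul_mul_assoc]

theorem SubV_le_ISub (D : CurveData K r n) (B : Finset (Fin r → LaurentSeries K)) (k : ℕ) :
    SubV D B k ≤ ISub D B := by
  rintro v ⟨φ, hφ, rfl⟩
  exact ⟨fun b => D.psi (φ b), fun b _ => mem_O_psi D _, rfl⟩

theorem SubV_antitone (D : CurveData K r n) (B : Finset (Fin r → LaurentSeries K))
    {k k' : ℕ} (h : k ≤ k') : SubV D B k' ≤ SubV D B k := by
  rintro v ⟨φ, hφ, rfl⟩
  exact ⟨φ, fun b hb d hd => hφ b hb d (lt_of_lt_of_le hd h), rfl⟩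

theorem lOrd_coe_of_lowZero {x : Fin n → PowerSeries K}
    (hx : ∀ j, PowerSeries.constantCoeff (R := K) (x j) = 0) {k : ℕ}
    {F : MvPowerSeries (Fin n) K} (hF : LowZero k F) :
    ((k : ℤ) : WithTop ℤ) ≤ lOrd ((psiFun x F : PowerSeries K) : LaurentSeries K) := by
  refine le_lOrd_of_forall fun i hi => ?_
  have hik : i < (k : ℤ) := by exact_mod_cast hi
  rw [PowerSeries.coeff_coe]
  split_ifs with h
  · rfl
  · push_neg at h
    refine coeff_psiFun_eq_zero_of_lowZero x hx hF ?_
    omega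

/-- the coefficient-floor vector of the generators -/
noncomputable def muB (B : Finset (Fin r → LaurentSeries K)) (j : Fin r) : WithTop ℤ :=
  B.inf fun b => lOrd (b j)

theorem lOrd_SubV (D : CurveData K r n) (B : Finset (Fin r → LaurentSeries K)) (k : ℕ)
    {y : Fin r → LaurentSeries K} (hy : y ∈ SubV D B k) (j : Fin r) :
    ((k : ℤ) : WithTop ℤ) + muB B j ≤ lOrd (y j) := by
  obtain ⟨φ, hφ, rfl⟩ := hy
  have : (∑ b ∈ B, D.psi (φ b) * b) j = ∑ b ∈ B, (D.psi (φ b)) j * b j := by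
    rw [Finset.sum_apply]
    rfl
  rw [this]
  refine le_lOrd_sum B _ fun b hb => ?_
  rw [lOrd_mul]
  refine add_le_add ?_ (Finset.inf_le hb)
  exact lOrd_coe_of_lowZero (fun j' => D.const_coeff_zero j' j) (hφ b hb)

/-- the finite dimensional polynomial part space -/
def Pspan (D : CurveData K r n) (B : Finset (Fin r → LaurentSeries K)) (k : ℕ) :
    Submodule K (Fin r → LaurentSeries K) :=
  Submodule.span K ((fun p : (Fin n → Fin k) × (Fin r → LaurentSeries K) =>
    D.psi (MvPowerSeries.monomial (R := K) (tF p.1) 1) * p.2) '' (Set.univ ×ˢ (B : Set _)))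

instance Pspan_fd (D : CurveData K r n) (B : Finset (Fin r → LaurentSeries K)) (k : ℕ) :
    FiniteDimensional K (Pspan D B k) := by
  apply FiniteDimensional.span_of_finite
  exact Set.Finite.image _ (Set.Finite.prod (Set.finite_univ) (B.finite_toSet))

/-- decomposition of an ideal element into polynomial part and `V_k` part -/
theorem ISub_decomp (D : CurveData K r n) (B : Finset (Fin r → LaurentSeries K)) (k : ℕ)
    {y : Fin r → LaurentSeries K} (hy : y ∈ ISub D B) :
    ∃ p ∈ Pspan D B k, ∃ v ∈ SubV D B k, y = p + v := by
  obtain ⟨a, ha, rfl⟩ := hy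
  refine ⟨∑ b ∈ B, D.psi (lowPoly k (preO D (a b))) * b, ?_,
    ∑ b ∈ B, D.psi (preO D (a b) - lowPoly k (preO D (a b))) * b,
    ⟨fun b => preO D (a b) - lowPoly k (preO D (a b)),
      fun b hb => lowZero_sub_lowPoly k _, rfl⟩, ?_⟩
  · refine Submodule.sum_mem _ fun b hb => ?_
    have hlp : D.psi (lowPoly k (preO D (a b))) * b =
        ∑ e : Fin n → Fin k, (MvPowerSeries.coeff (R := K) (tF e) (preO D (a b))) •
          (D.psi (MvPowerSeries.monomial (R := K) (tF e) 1) * b) := by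
      rw [lowPoly]
      have : D.psi (∑ e : Fin n → Fin k,
          MvPowerSeries.monomial (R := K) (tF e) (MvPowerSeries.coeff (R := K) (tF e) (preO D (a b)))) =
          ∑ e : Fin n → Fin k,
            D.psi (MvPowerSeries.monomial (R := K) (tF e) (MvPowerSeries.coeff (R := K) (tF e) (preO D (a b)))) := by
        rw [← DpsiRing_apply, map_sum]
        rfl
      rw [this, Finset.sum_mul]
      refine Finset.sum_congr rfl fun e _ => ?_
      have hmon : (MvPowerSeries.monomial (R := K) (tF e)) (MvPowerSeries.coeff (R := K) (tF e) (preO D (a b)))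
          = (MvPowerSeries.coeff (R := K) (tF e) (preO D (a b))) • MvPowerSeries.monomial (R := K) (tF e) 1 := by
        rw [← map_smul]
        congr 1
        rw [smul_eq_mul, mul_one]
      rw [hmon, psi_smul, smul_mul_assoc]
    rw [hlp]
    refine Submodule.sum_mem _ fun e _ => ?_
    refine Submodule.smul_mem _ _ (Submodule.subset_span ?_)
    exact ⟨(e, b), ⟨Set.mem_univ _, hb⟩, rfl⟩
  · rw [← Finset.sum_add_distrib]
    refine Finset.sum_congr rfl fun b hb => ?_
    have h1 : a b = D.psi (preO D (a b)) := (psi_preO D (ha b hb)).symm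
    rw [← add_mul]
    nth_rewrite 1 [h1]
    congr 1
    rw [← psi_add]
    congr 1
    ring

/-- stabilization of an antitone chain of submodules inside a f.d. one -/
theorem chain_stabilizes {V : Type*} [AddCommGroup V] [Module K V]
    (P : Submodule K V) [FiniteDimensional K P]
    (X : ℕ → Submodule K V) (hmono : ∀ {N M : ℕ}, N ≤ M → X M ≤ X N)
    (hle : ∀ N, X N ≤ P) :
    ∃ N₀, ∀ N, N₀ ≤ N → X N = X N₀ := by
  haveI : ∀ N, FiniteDimensional K (X N) := fun N =>
    Submodule.finiteDimensional_of_le (hle N)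
  set d : ℕ → ℕ := fun N => Module.finrank K (X N) with hd
  have hne : (Set.range d).Nonempty := ⟨d 0, ⟨0, rfl⟩⟩
  obtain ⟨N₀, hN₀⟩ := Nat.sInf_mem hne
  refine ⟨N₀, fun N hN => ?_⟩
  refine Submodule.eq_of_le_of_finrank_le (hmono hN) ?_
  exact le_trans (le_of_eq hN₀) (Nat.sInf_le ⟨N, rfl⟩)

end SB8

/-! ### Auxiliary: helpers for the extraction argument -/

namespace SB8

set_option synthInstance.maxHeartbeats 1000000

variable {K : Type*} [Field K] {r n : ℕ}

/-- submodule of vectors with a coordinatewise order floor -/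
def Vfloor (δ : Fin r → WithTop ℤ) : Submodule K (Fin r → LaurentSeries K) where
  carrier := {y | ∀ j, δ j ≤ lOrd (y j)}
  add_mem' := by
    intro a b ha hb j
    refine le_trans (le_min (ha j) (hb j)) ?_
    exact min_le_lOrd_add
  zero_mem' := by
    intro j
    simp
  smul_mem' := by
    intro c y hy j
    exact le_trans (hy j) (lOrd_le_lOrd_smul c (y j))

/-- submodule of vectors vanishing at a coordinate -/
def Zsub (j : Fin r) : Submodule K (Fin r → LaurentSeries K) where
  carrier := {y | y j = 0}
  add_mem' := by
    intro a b ha hb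
    show a j + b j = 0
    rw [ha, hb, add_zero]
  zero_mem' := rfl
  smul_mem' := by
    intro c y hy
    show c • y j = 0
    rw [hy, smul_zero]

/-- generic chain construction by recursive choice -/
theorem chain_build {α : Type*} (a0 : α) (P : ℕ → α → Prop) (R : ℕ → α → α → Prop)
    (h0 : P 0 a0) (hstep : ∀ l a, P l a → ∃ a', P (l + 1) a' ∧ R l a a') :
    ∃ z : ℕ → α, z 0 = a0 ∧ (∀ l, P l (z l)) ∧ ∀ l, R l (z l) (z (l + 1)) := by
  classical
  let F : (l : ℕ) → {a : α // P l a} := fun l =>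
    Nat.rec ⟨a0, h0⟩ (fun l prev =>
      ⟨(hstep l prev.1 prev.2).choose, (hstep l prev.1 prev.2).choose_spec.1⟩) l
  refine ⟨fun l => (F l).1, rfl, fun l => (F l).2, fun l => ?_⟩
  exact (hstep l (F l).1 (F l).2).choose_spec.2

theorem exists_nat_le_add (t : ℤ) (w : WithTop ℤ) :
    ∃ L0 : ℕ, ∀ L : ℕ, L0 ≤ L → (t : WithTop ℤ) ≤ ((L : ℤ) : WithTop ℤ) + w := by
  cases w with
  | top =>
    exact ⟨0, fun L _ => by rw [add_top]; exact le_top⟩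
  | coe m =>
    refine ⟨(t - m).toNat, fun L hL => ?_⟩
    have h1 : t - m ≤ (L : ℤ) := le_trans (Int.self_le_toNat _) (by exact_mod_cast hL)
    have h2 : t ≤ (L : ℤ) + m := by omega
    calc (t : WithTop ℤ) ≤ (((L : ℤ) + m : ℤ) : WithTop ℤ) := by exact_mod_cast h2
      _ = ((L : ℤ) : WithTop ℤ) + (m : WithTop ℤ) := by push_cast; ring

theorem exists_nat_lt_add (t : ℤ) (w : WithTop ℤ) :
    ∃ L0 : ℕ, ∀ L : ℕ, L0 ≤ L → (t : WithTop ℤ) < ((L : ℤ) : WithTop ℤ) + w := by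
  cases w with
  | top =>
    refine ⟨0, fun L _ => ?_⟩
    rw [add_top]
    exact WithTop.coe_lt_top t
  | coe m =>
    refine ⟨(t + 1 - m).toNat, fun L hL => ?_⟩
    have h1 : t + 1 - m ≤ (L : ℤ) := le_trans (Int.self_le_toNat _) (by exact_mod_cast hL)
    have h2 : t < (L : ℤ) + m := by omega
    calc (t : WithTop ℤ) < (((L : ℤ) + m : ℤ) : WithTop ℤ) := by exact_mod_cast h2
      _ = ((L : ℤ) : WithTop ℤ) + (m : WithTop ℤ) := by push_cast; ring

/-- choice of the level `k₀` -/
theorem exists_k0 (δ μ : Fin r → WithTop ℤ) :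
    ∃ k₀ : ℕ, ∀ j, δ j ≠ ⊤ → δ j < ((k₀ : ℤ) : WithTop ℤ) + μ j := by
  classical
  choose c hc using fun j => exists_nat_lt_add (WithTop.untopD 0 (δ j)) (μ j)
  refine ⟨Finset.univ.sup c, fun j hj => ?_⟩
  cases hδ : δ j with
  | top => exact absurd hδ hj
  | coe t =>
    have h1 : WithTop.untopD 0 (δ j) = t := by rw [hδ]; rfl
    have := hc j (Finset.univ.sup c) (Finset.le_sup (Finset.mem_univ j))
    rw [h1] at this
    exact this

end SB8

/-! ### Auxiliary: the extraction (completeness) argument -/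

namespace SB8

set_option synthInstance.maxHeartbeats 1000000
set_option maxHeartbeats 1000000

variable {K : Type*} [Field K] {r n : ℕ}

theorem lOrd_neg (y : LaurentSeries K) : lOrd (-y) = lOrd y := by
  rw [lOrd_eq_orderTop, lOrd_eq_orderTop]
  exact HahnSeries.orderTop_neg

theorem psi_sub (D : CurveData K r n) (F G : MvPowerSeries (Fin n) K) :
    D.psi (F - G) = D.psi F - D.psi G := by
  rw [← DpsiRing_apply, map_sub]
  rfl

/-- a coefficientwise infinite sum -/
noncomputable def sigSum (φ : ℕ → MvPowerSeries (Fin n) K) : MvPowerSeries (Fin n) K :=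
  fun d => ∑ l ∈ Finset.range (degF d + 1), MvPowerSeries.coeff (R := K) d (φ l)

theorem coeff_sigSum (φ : ℕ → MvPowerSeries (Fin n) K) (d : Fin n →₀ ℕ) :
    MvPowerSeries.coeff (R := K) d (sigSum φ) =
      ∑ l ∈ Finset.range (degF d + 1), MvPowerSeries.coeff (R := K) d (φ l) := rfl

theorem sigSum_tail (φ : ℕ → MvPowerSeries (Fin n) K) (k₀ : ℕ)
    (hφ : ∀ l, LowZero (k₀ + l) (φ l)) (L : ℕ) :
    LowZero (k₀ + L) ((∑ l ∈ Finset.range L, φ l) - sigSum φ) := by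
  intro d hd
  rw [map_sub, coeff_sigSum, map_sum]
  have hz : ∀ l, degF d < k₀ + l → MvPowerSeries.coeff (R := K) d (φ l) = 0 := fun l h => hφ l d h
  have e1 : ∑ l ∈ Finset.range L, MvPowerSeries.coeff (R := K) d (φ l)
      = ∑ l ∈ Finset.range L ∩ Finset.range (degF d + 1), MvPowerSeries.coeff (R := K) d (φ l) := by
    refine (Finset.sum_subset Finset.inter_subset_left ?_).symm
    intro l hl hnl
    rw [Finset.mem_range] at hl
    have hld : degF d < l := by
      by_contra hh
      exact hnl (Finset.mem_inter.2 ⟨Finset.mem_range.2 hl, Finset.mem_range.2 (by omega)⟩)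
    exact hz l (by omega)
  have e2 : ∑ l ∈ Finset.range (degF d + 1), MvPowerSeries.coeff (R := K) d (φ l)
      = ∑ l ∈ Finset.range L ∩ Finset.range (degF d + 1), MvPowerSeries.coeff (R := K) d (φ l) := by
    refine (Finset.sum_subset Finset.inter_subset_right ?_).symm
    intro l hl hnl
    rw [Finset.mem_range] at hl
    have hlL : L ≤ l := by
      by_contra hh
      exact hnl (Finset.mem_inter.2 ⟨Finset.mem_range.2 (by omega), Finset.mem_range.2 hl⟩)
    exact hz l (by omega)
  rw [e1, e2, sub_self]

/-- **The extraction argument.** From a sequence in the fractional ideal with a fixed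
value at `i`, a common floor `δ`, and unbounded order at `jst`, produce an element of
the ideal vanishing at `jst`, with the same floor and the same value at `i`. -/
theorem extraction (D : CurveData K r n) (B : Finset (Fin r → LaurentSeries K))
    (δ : Fin r → WithTop ℤ) (i jst : Fin r) (k₀ : ℕ)
    (hk₀ : ∀ j, δ j ≠ ⊤ → δ j < ((k₀ : ℤ) : WithTop ℤ) + muB B j)
    (s : ℕ → Fin r → LaurentSeries K)
    (hsI : ∀ m, s m ∈ ISub D B)
    (hsflr : ∀ m j, δ j ≤ lOrd (s m j))
    (hsi : ∀ m, lOrd (s m i) = δ i)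
    (hitop : δ i ≠ ⊤)
    (hunb : ∀ t : ℤ, ∃ m, (t : WithTop ℤ) ≤ lOrd (s m jst)) :
    ∃ z, z ∈ ISub D B ∧ z jst = 0 ∧ (∀ j, δ j ≤ lOrd (z j)) ∧ lOrd (z i) = δ i := by
  classical
  -- decompositions at every level
  have hdec : ∀ km : ℕ × ℕ, ∃ p ∈ Pspan D B km.1, ∃ v ∈ SubV D B km.1, s km.2 = p + v :=
    fun km => ISub_decomp D B km.1 (hsI km.2)
  choose pp hpp vparts hvparts hsplit using hdec
  -- tail spans
  set TI : ℕ → Set ℕ := fun N => {m | ((N : ℤ) : WithTop ℤ) ≤ lOrd (s m jst)} with hTI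
  set SS : ℕ → Submodule K (Fin r → LaurentSeries K) :=
    fun N => Submodule.span K (s '' TI N) with hSS
  set PJ : ℕ → ℕ → Submodule K (Fin r → LaurentSeries K) :=
    fun k N => Submodule.span K ((fun m => pp (k, m)) '' TI N) with hPJ
  have hTImono : ∀ {N M : ℕ}, N ≤ M → TI M ⊆ TI N := by
    intro N M hNM m hm
    simp only [hTI, Set.mem_setOf_eq] at hm ⊢
    have h1 : ((N : ℤ) : WithTop ℤ) ≤ ((M : ℤ) : WithTop ℤ) := by exact_mod_cast hNM
    exact le_trans h1 hm
  have hPJmono : ∀ k {N M : ℕ}, N ≤ M → PJ k M ≤ PJ k N := by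
    intro k N M hNM
    exact Submodule.span_mono (Set.image_mono (hTImono hNM))
  have hPJle : ∀ k N, PJ k N ≤ Pspan D B k := by
    intro k N
    rw [hPJ, Submodule.span_le]
    rintro y ⟨m, _, rfl⟩
    exact hpp (k, m)
  have hstab : ∀ k, ∃ N₀, ∀ N, N₀ ≤ N → PJ k N = PJ k N₀ :=
    fun k => chain_stabilizes (Pspan D B k) (PJ k) (fun h => hPJmono k h) (hPJle k)
  choose N₀ hN₀ using hstab
  -- the index sequence
  set NN : ℕ → ℕ := fun l => l + (Finset.range (l + 1)).sup (fun l' => N₀ (k₀ + l')) with hNN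
  have hNNmono : Monotone NN := by
    intro a b hab
    refine Nat.add_le_add hab ?_
    exact Finset.sup_mono (Finset.range_subset_range.2 (by omega))
  have hNNge : ∀ l, N₀ (k₀ + l) ≤ NN l := by
    intro l
    have h1 : N₀ (k₀ + l) ≤ (Finset.range (l + 1)).sup (fun l' => N₀ (k₀ + l')) :=
      Finset.le_sup (f := fun l' => N₀ (k₀ + l')) (Finset.mem_range.2 (Nat.lt_succ_self l))
    exact le_trans h1 (Nat.le_add_left _ _)
  have hNNgeL : ∀ l, l ≤ NN l := fun l => Nat.le_add_right _ _
  -- basic span inclusions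
  have hSS_I : ∀ N, SS N ≤ ISub D B := by
    intro N
    rw [hSS, Submodule.span_le]
    rintro y ⟨m, _, rfl⟩
    exact hsI m
  have hSS_flr : ∀ N, SS N ≤ Vfloor δ := by
    intro N
    rw [hSS, Submodule.span_le]
    rintro y ⟨m, _, rfl⟩
    exact fun j => hsflr m j
  have hSS_jst : ∀ N, SS N ≤ Vfloor (fun j => if j = jst then ((N : ℤ) : WithTop ℤ) else δ j) := by
    intro N
    rw [hSS, Submodule.span_le]
    rintro y ⟨m, hm, rfl⟩
    intro j
    simp only [hTI, Set.mem_setOf_eq] at hm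
    show (if j = jst then ((N : ℤ) : WithTop ℤ) else δ j) ≤ lOrd (s m j)
    split_ifs with hj
    · rw [hj]; exact hm
    · exact hsflr m j
  have h1 : ∀ k N, SS N ≤ SubV D B k ⊔ PJ k N := by
    intro k N
    rw [hSS, Submodule.span_le]
    rintro y ⟨m, hm, rfl⟩
    rw [SetLike.mem_coe, Submodule.mem_sup]
    refine ⟨vparts (k, m), hvparts (k, m), pp (k, m), Submodule.subset_span ⟨m, hm, rfl⟩, ?_⟩
    rw [hsplit (k, m)]
    ring
  have h2 : ∀ k N, PJ k N ≤ SubV D B k ⊔ SS N := by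
    intro k N
    rw [hPJ, Submodule.span_le]
    rintro y ⟨m, hm, rfl⟩
    rw [SetLike.mem_coe, Submodule.mem_sup]
    refine ⟨-(vparts (k, m)), Submodule.neg_mem _ (hvparts (k, m)), s m,
      Submodule.subset_span ⟨m, hm, rfl⟩, ?_⟩
    rw [hsplit (k, m)]
    ring
  -- the chain
  obtain ⟨m₀, hm₀⟩ := hunb ((NN 0 : ℕ) : ℤ)
  have hz0 : s m₀ ∈ SS (NN 0) := Submodule.subset_span ⟨m₀, hm₀, rfl⟩
  have step : ∀ l zc, zc ∈ SS (NN l) → ∃ z', z' ∈ SS (NN (l + 1)) ∧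
      zc - z' ∈ SubV D B (k₀ + l) := by
    intro l zc hzc
    have e1 : PJ (k₀ + l) (NN l) = PJ (k₀ + l) (NN (l + 1)) := by
      rw [hN₀ (k₀ + l) (NN l) (hNNge l),
        hN₀ (k₀ + l) (NN (l + 1)) (le_trans (hNNge l) (hNNmono (Nat.le_succ l)))]
    have hmem : zc ∈ SubV D B (k₀ + l) ⊔ SS (NN (l + 1)) := by
      have step1 : zc ∈ SubV D B (k₀ + l) ⊔ PJ (k₀ + l) (NN l) := h1 (k₀ + l) (NN l) hzc
      rw [e1] at step1
      have step2 : SubV D B (k₀ + l) ⊔ PJ (k₀ + l) (NN (l + 1)) ≤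
          SubV D B (k₀ + l) ⊔ (SubV D B (k₀ + l) ⊔ SS (NN (l + 1))) :=
        sup_le_sup_left (h2 (k₀ + l) (NN (l + 1))) _
      have := step2 step1
      rwa [← sup_assoc, sup_idem] at this
    rw [Submodule.mem_sup] at hmem
    obtain ⟨w, hw, z', hz', hsum⟩ := hmem
    exact ⟨z', hz', by rw [← hsum]; ring_nf; exact hw⟩
  obtain ⟨z, hz0', hzP, hzR⟩ := chain_build (s m₀) (fun l y => y ∈ SS (NN l))
    (fun l y y' => y - y' ∈ SubV D B (k₀ + l)) hz0 step
  -- extract coefficient functions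
  have hwl : ∀ l, ∃ φ : (Fin r → LaurentSeries K) → MvPowerSeries (Fin n) K,
      (∀ b ∈ B, LowZero (k₀ + l) (φ b)) ∧ z l - z (l + 1) = ∑ b ∈ B, D.psi (φ b) * b :=
    fun l => hzR l
  choose φl hφl1 hφl2 using hwl
  -- the limit element
  set Gb : (Fin r → LaurentSeries K) → MvPowerSeries (Fin n) K :=
    fun b => sigSum (fun l => φl l b) with hGb
  set xx : Fin r → LaurentSeries K := z 0 - ∑ b ∈ B, D.psi (Gb b) * b with hxx
  -- key bound: xx - z L lives in SubV (k₀ + L)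
  have hkey : ∀ L, xx - z L ∈ SubV D B (k₀ + L) := by
    intro L
    have htel : z 0 - z L = ∑ l ∈ Finset.range L, (z l - z (l + 1)) :=
      (Finset.sum_range_sub' z L).symm
    have hsum : ∑ l ∈ Finset.range L, (z l - z (l + 1)) =
        ∑ b ∈ B, D.psi (∑ l ∈ Finset.range L, φl l b) * b := by
      calc ∑ l ∈ Finset.range L, (z l - z (l + 1))
          = ∑ l ∈ Finset.range L, ∑ b ∈ B, D.psi (φl l b) * b :=
            Finset.sum_congr rfl fun l _ => hφl2 l
        _ = ∑ b ∈ B, ∑ l ∈ Finset.range L, D.psi (φl l b) * b := Finset.sum_comm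
        _ = ∑ b ∈ B, D.psi (∑ l ∈ Finset.range L, φl l b) * b := by
            refine Finset.sum_congr rfl fun b _ => ?_
            rw [← Finset.sum_mul]
            congr 1
            rw [← DpsiRing_apply, map_sum]
            rfl
    have hxzL : xx - z L = ∑ b ∈ B, D.psi ((∑ l ∈ Finset.range L, φl l b) - Gb b) * b := by
      have : xx - z L = (z 0 - z L) - ∑ b ∈ B, D.psi (Gb b) * b := by
        rw [hxx]; ring
      rw [this, htel, hsum, ← Finset.sum_sub_distrib]
      refine Finset.sum_congr rfl fun b _ => ?_
      rw [psi_sub, sub_mul]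
    rw [hxzL]
    exact ⟨fun b => (∑ l ∈ Finset.range L, φl l b) - Gb b,
      fun b hb => sigSum_tail (fun l => φl l b) k₀ (fun l => hφl1 l b hb) L, rfl⟩
  have hkeyOrd : ∀ (L : ℕ) (j : Fin r),
      (((k₀ + L : ℕ) : ℤ) : WithTop ℤ) + muB B j ≤ lOrd ((xx - z L) j) :=
    fun L j => lOrd_SubV D B (k₀ + L) (hkey L) j
  -- membership of xx
  have hxI : xx ∈ ISub D B := by
    rw [hxx]
    refine Submodule.sub_mem _ (hSS_I (NN 0) (hzP 0)) ?_
    exact ⟨fun b => D.psi (Gb b), fun b _ => mem_O_psi D _, rfl⟩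
  -- coordinatewise lower bounds via the chain
  have hbnd : ∀ (L : ℕ) (j : Fin r),
      min (lOrd (z L j)) ((((k₀ + L : ℕ) : ℤ) : WithTop ℤ) + muB B j) ≤ lOrd (xx j) := by
    intro L j
    have hrw : xx = z L + (xx - z L) := by ring
    rw [hrw]
    have h1' : (z L + (xx - z L)) j = z L j + (xx - z L) j := rfl
    rw [h1']
    exact le_trans (le_min (min_le_left _ _)
      (le_trans (min_le_right _ _) (hkeyOrd L j))) min_le_lOrd_add
  -- xx vanishes at jst
  have hxjst : xx jst = 0 := by
    refine eq_zero_of_forall_le_lOrd fun t => ?_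
    obtain ⟨L1, hL1⟩ := exists_nat_le_add t (muB B jst)
    set L := max L1 t.toNat with hLdef
    refine le_trans ?_ (hbnd L jst)
    refine le_min ?_ ?_
    · have hmem : ((NN L : ℤ) : WithTop ℤ) ≤ lOrd (z L jst) := by
        simpa using hSS_jst (NN L) (hzP L) jst
      refine le_trans ?_ hmem
      have ht : t ≤ (NN L : ℤ) := by
        have h1' : t.toNat ≤ L := le_max_right _ _
        have h2' : (L : ℕ) ≤ NN L := hNNgeL L
        omega
      exact_mod_cast WithTop.coe_le_coe.2 ht
    · have h3 := hL1 L (le_max_left _ _)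
      refine le_trans h3 (add_le_add ?_ le_rfl)
      have : (L : ℤ) ≤ ((k₀ + L : ℕ) : ℤ) := by push_cast; omega
      exact_mod_cast WithTop.coe_le_coe.2 this
  -- floor for xx
  have hxflr : ∀ j, δ j ≤ lOrd (xx j) := by
    intro j
    by_cases hj : δ j = ⊤
    · have hzLj : ∀ L : ℕ, lOrd (z L j) = ⊤ := by
        intro L
        have := hSS_flr (NN L) (hzP L) j
        rw [hj] at this
        exact le_antisymm le_top this
      rw [hj]
      have hx0 : xx j = 0 := by
        refine eq_zero_of_forall_le_lOrd fun t => ?_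
        obtain ⟨L1, hL1⟩ := exists_nat_le_add t (muB B j)
        refine le_trans ?_ (hbnd L1 j)
        rw [hzLj L1, min_eq_right le_top]
        refine le_trans (hL1 L1 le_rfl) (add_le_add ?_ le_rfl)
        have : (L1 : ℤ) ≤ ((k₀ + L1 : ℕ) : ℤ) := by push_cast; omega
        exact_mod_cast WithTop.coe_le_coe.2 this
      rw [hx0]
      simp
    · refine le_trans (le_min (hSS_flr (NN 0) (hzP 0) j) ?_) (hbnd 0 j)
      have hle : ((k₀ : ℤ) : WithTop ℤ) ≤ (((k₀ + 0 : ℕ) : ℤ) : WithTop ℤ) := by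
        norm_num
      exact le_trans (le_of_lt (hk₀ j hj)) (add_le_add hle le_rfl)
  -- exact order at i
  have hxi : lOrd (xx i) = δ i := by
    have hz0i : lOrd (z 0 i) = δ i := by rw [hz0']; exact hsi m₀
    have hxz0 : ((k₀ : ℤ) : WithTop ℤ) + muB B i ≤ lOrd ((xx - z 0) i) := by
      refine le_trans (add_le_add ?_ le_rfl) (hkeyOrd 0 i)
      norm_num
    have hlt : lOrd (z 0 i) < lOrd ((z 0 - xx) i) := by
      have hneg : (z 0 - xx) i = -((xx - z 0) i) := by
        show (z 0 - xx) i = -((xx - z 0) i)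
        have : z 0 - xx = -(xx - z 0) := by ring
        rw [this]
        rfl
      rw [hneg, lOrd_neg, hz0i]
      exact lt_of_lt_of_le (hk₀ i hitop) hxz0
    have hmain := lOrd_sub_eq_left hlt
    have hxeq : z 0 - (z 0 - xx) = xx := by ring
    have h2' : (z 0 - (z 0 - xx)) i = z 0 i - (z 0 - xx) i := rfl
    rw [hxeq] at h2'
    rw [h2', hmain, hz0i]
  exact ⟨xx, hxI, hxjst, hxflr, hxi⟩

end SB8

/-! ### Auxiliary: the main per-coordinate lemma -/

namespace SB8

set_option synthInstance.maxHeartbeats 1000000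
set_option maxHeartbeats 2000000

variable {K : Type*} [Field K] {r n : ℕ}

/-- a generating pair achieving the value at coordinate `i` -/
def IsPair (D : CurveData K r n) (H : Finset (Fin r → LaurentSeries K))
    (δ : Fin r → WithTop ℤ) (i : Fin r) : Prop :=
  ∃ γ h, γ ∈ D.Gamma ∧ h ∈ H ∧ (∀ j, δ j ≤ γ j + lOrd (h j)) ∧ γ i + lOrd (h i) = δ i

theorem pair_of_term (D : CurveData K r n) (H : Finset (Fin r → LaurentSeries K))
    (δ : Fin r → WithTop ℤ) (i : Fin r) {o h : Fin r → LaurentSeries K}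
    (hh : h ∈ H) (ho : o ∈ D.O)
    (hflr : ∀ j, δ j ≤ lOrd ((o * h) j)) (hi : lOrd ((o * h) i) = δ i) :
    IsPair D H δ i := by
  refine ⟨vv o, h, ⟨o, ho, rfl⟩, hh, fun j => ?_, ?_⟩
  · have he : (o * h) j = o j * h j := rfl
    have := hflr j
    rwa [he, lOrd_mul] at this
  · have he : (o * h) i = o i * h i := rfl
    rw [he, lOrd_mul] at hi
    exact hi

theorem red_term (D : CurveData K r n) {G H : Finset (Fin r → LaurentSeries K)}
    (hG : ↑G ⊆ D.Mset \ {0}) {g f' : Fin r → LaurentSeries K} {k : Fin r}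
    (hred : IsKRed G H k g f') :
    ∃ o h, h ∈ H ∧ o ∈ D.O ∧ g - f' = o * h ∧
      (∀ j, lOrd (g j) ≤ lOrd (f' j)) ∧ lOrd (g k) < lOrd (f' k) ∧ lOrd (g k) ≠ ⊤ := by
  obtain ⟨hktop, c, α, h, hH, hf'eq, hmono, hstrict⟩ := hred
  refine ⟨c • Gprod G α, h, hH, ?_, ?_, hmono, hstrict, hktop⟩
  · refine mem_O_smul D c (mem_O_Gprod D (fun g' hg' => ?_) α)
    exact ((hG hg').1).1
  · rw [hf'eq, sub_sub_cancel, smul_mul_assoc]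

theorem WithTop.add_one_le_of_lt' {a b : WithTop ℤ} (ha : a ≠ ⊤) (hab : a < b) :
    a + 1 ≤ b := by
  cases a with
  | top => exact absurd rfl ha
  | coe t =>
    cases b with
    | top => exact le_top
    | coe u =>
      have : t < u := by exact_mod_cast hab
      have h2 : t + 1 ≤ u := by omega
      calc ((t : WithTop ℤ) + 1) = ((t + 1 : ℤ) : WithTop ℤ) := by push_cast; ring
        _ ≤ (u : WithTop ℤ) := by exact_mod_cast h2

/-- **Main per-coordinate lemma.** -/
theorem main_pair (D : CurveData K r n) (G H B : Finset (Fin r → LaurentSeries K))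
    (hG : ↑G ⊆ D.Mset \ {0})
    (hHI : ∀ h ∈ H, h ∈ ISub D B)
    (hred : ∀ f ∈ ISet D B, f ≠ 0 → ∃ f', IsRed G H f f')
    (δ : Fin r → WithTop ℤ) (i : Fin r) (hitop : δ i ≠ ⊤) :
    ∀ (W : Finset (Fin r)), ∀ g ∈ ISub D B,
      (∀ j, (if j ∈ W ∨ j = i then δ j else ⊤) ≤ lOrd (g j)) →
      lOrd (g i) = δ i → IsPair D H δ i := by
  classical
  intro W
  induction W using Finset.strongInduction with
  | _ W IH =>
  intro g hgI hgflr hgi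
  by_contra hP
  set δ' : Fin r → WithTop ℤ := fun j => if j ∈ W ∨ j = i then δ j else ⊤ with hδ'
  have hδ'le : ∀ j, δ j ≤ δ' j ∨ δ' j = ⊤ := by
    intro j
    show δ j ≤ (if j ∈ W ∨ j = i then δ j else ⊤) ∨ (if j ∈ W ∨ j = i then δ j else ⊤) = ⊤
    split_ifs with hj
    · exact Or.inl le_rfl
    · exact Or.inr rfl
  have hδ'ge : ∀ j, δ j ≤ δ' j := by
    intro j
    rcases hδ'le j with h | h
    · exact h
    · rw [h]; exact le_top
  have hδ'i : δ' i = δ i := by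
    show (if i ∈ W ∨ i = i then δ i else ⊤) = δ i
    simp
  -- the invariant
  set Inv : (Fin r → LaurentSeries K) → Prop := fun y =>
    y ∈ ISub D B ∧ (∀ j, δ' j ≤ lOrd (y j)) ∧ lOrd (y i) = δ i with hInv
  have hgInv : Inv g := ⟨hgI, hgflr, hgi⟩
  -- the step
  have hstep : ∀ y, Inv y → ∃ y', Inv y' ∧ ∃ k, k ∈ W ∧ k ≠ i ∧ lOrd (y k) ≠ ⊤ ∧
      lOrd (y k) < lOrd (y' k) ∧ ∀ j, lOrd (y j) ≤ lOrd (y' j) := by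
    rintro y ⟨hyI, hyflr, hyi⟩
    have hyδ : ∀ j, δ j ≤ lOrd (y j) := fun j => le_trans (hδ'ge j) (hyflr j)
    have hy0 : y ≠ 0 := by
      intro h0
      rw [h0] at hyi
      have : lOrd ((0 : Fin r → LaurentSeries K) i) = ⊤ := by simp
      rw [this] at hyi
      exact hitop hyi.symm
    obtain ⟨f', k, hkred⟩ := hred y hyI hy0
    obtain ⟨o, h, hH, hO, hT, hmono, hstrict, hktop⟩ := red_term D hG hkred
    -- bounds of the term
    have hTbnd : ∀ j, lOrd (y j) ≤ lOrd ((o * h) j) := by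
      intro j
      rw [← hT]
      have he : (y - f') j = y j - f' j := rfl
      rw [he]
      refine le_trans ?_ min_le_lOrd_sub
      exact le_min le_rfl (hmono j)
    have hTi : δ i ≤ lOrd ((o * h) i) := by
      rw [← hyi]
      exact hTbnd i
    rcases eq_or_lt_of_le hTi with hcase | hcase
    · -- crossing: a pair exists, contradiction
      exact absurd (pair_of_term D H δ i hH hO
        (fun j => le_trans (hyδ j) (hTbnd j)) hcase.symm) hP
    · -- continue the chain with f'
      have hf'i : lOrd (f' i) = δ i := by
        have hf'eq : f' = y - (o * h) := by rw [← hT]; ring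
        have he : (y - o * h) i = y i - (o * h) i := rfl
        rw [hf'eq, he, lOrd_sub_eq_left (by rw [hyi]; exact hcase), hyi]
      have hki : k ≠ i := by
        intro hk
        rw [hk] at hstrict
        rw [hf'i, hyi] at hstrict
        exact lt_irrefl _ hstrict
      have hkW : k ∈ W := by
        by_contra hkW
        have htopk : δ' k = ⊤ := by
          show (if k ∈ W ∨ k = i then δ k else ⊤) = ⊤
          rw [if_neg (by push_neg; exact ⟨hkW, hki⟩)]
        have h5 := le_antisymm le_top (htopk ▸ hyflr k)
        exact hktop h5
      have hf'I : f' ∈ ISub D B := by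
        have : f' = y - o * h := by rw [← hT]; ring
        rw [this]
        exact Submodule.sub_mem _ hyI (mul_mem_ISub D B hO (hHI h hH))
      exact ⟨f', ⟨hf'I, fun j => le_trans (hyflr j) (hmono j), hf'i⟩,
        k, hkW, hki, hktop, hstrict, hmono⟩
  -- build the chain
  have hstep' : ∀ (_ : ℕ) (y : Fin r → LaurentSeries K), Inv y → ∃ y', Inv y' ∧ (∃ k, k ∈ W ∧ k ≠ i ∧ lOrd (y k) ≠ ⊤ ∧
      lOrd (y k) < lOrd (y' k) ∧ ∀ j, lOrd (y j) ≤ lOrd (y' j)) := fun _ y hy => by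
    obtain ⟨y', h1, h2⟩ := hstep y hy
    exact ⟨y', h1, h2⟩
  obtain ⟨sq, hsq0, hsqP, hsqR⟩ := chain_build g (fun _ y => Inv y)
    (fun _ y y' => ∃ k, k ∈ W ∧ k ≠ i ∧ lOrd (y k) ≠ ⊤ ∧
      lOrd (y k) < lOrd (y' k) ∧ ∀ j, lOrd (y j) ≤ lOrd (y' j)) hgInv hstep'
  choose kf hkW hki hktop' hkstrict hkmono using hsqR
  -- monotonicity of the chain
  have hmono2 : ∀ {m m' : ℕ}, m ≤ m' → ∀ j, lOrd (sq m j) ≤ lOrd (sq m' j) := by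
    intro m m' hmm'
    induction m' with
    | zero =>
      intro j
      have : m = 0 := Nat.le_zero.1 hmm'
      rw [this]
    | succ m'' ih =>
      intro j
      rcases Nat.lt_or_ge m (m'' + 1) with hlt | hge
      · exact le_trans (ih (by omega) j) (hkmono m'' j)
      · have : m = m'' + 1 := by omega
        rw [this]
  -- pigeonhole: some coordinate is hit infinitely often
  obtain ⟨jst, hjst⟩ := Finite.exists_infinite_fiber kf
  have hjst' : (kf ⁻¹' {jst}).Infinite := Set.infinite_coe_iff.1 hjst
  have hjstW : jst ∈ W := by
    obtain ⟨m, hm⟩ := hjst'.nonempty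
    have hmeq : kf m = jst := hm
    rw [← hmeq]
    exact hkW m
  have hjsti : jst ≠ i := by
    obtain ⟨m, hm⟩ := hjst'.nonempty
    have hmeq : kf m = jst := hm
    rw [← hmeq]
    exact hki m
  -- arbitrarily late fiber elements
  have hfib : ∀ m : ℕ, ∃ m', m < m' ∧ kf m' = jst := by
    intro m
    obtain ⟨m', hm', hgt⟩ := hjst'.exists_gt m
    exact ⟨m', hgt, hm'⟩
  -- growth at jst
  have hgrow : ∀ m : ℕ, ∃ m', lOrd (sq m jst) + 1 ≤ lOrd (sq m' jst) := by
    intro m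
    obtain ⟨m', hmm', hkm'⟩ := hfib m
    refine ⟨m' + 1, ?_⟩
    have h1 : lOrd (sq m jst) ≤ lOrd (sq m' jst) := hmono2 (le_of_lt hmm') jst
    have h2 : lOrd (sq m' jst) < lOrd (sq (m' + 1) jst) := by
      have := hkstrict m'
      rwa [hkm'] at this
    have h3 : lOrd (sq m' jst) ≠ ⊤ := by
      have := hktop' m'
      rwa [hkm'] at this
    exact le_trans (add_le_add h1 le_rfl) (WithTop.add_one_le_of_lt' h3 h2)
  have hA : lOrd (sq 0 jst) ≠ ⊤ := by
    obtain ⟨m', hm', hk⟩ := hfib 0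
    intro hT
    have hmono3 := hmono2 (Nat.zero_le m') jst
    rw [hT] at hmono3
    have h3 := hktop' m'
    rw [hk] at h3
    exact h3 (le_antisymm le_top hmono3)
  obtain ⟨a₀, ha₀⟩ : ∃ a₀ : ℤ, lOrd (sq 0 jst) = (a₀ : WithTop ℤ) := by
    cases hc : lOrd (sq 0 jst) with
    | top => exact absurd hc hA
    | coe t => exact ⟨t, rfl⟩
  have hgrowth : ∀ c : ℕ, ∃ m, ((a₀ + c : ℤ) : WithTop ℤ) ≤ lOrd (sq m jst) := by
    intro c
    induction c with
    | zero =>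
      refine ⟨0, ?_⟩
      rw [ha₀]
      have he : (a₀ + ((0 : ℕ) : ℤ) : ℤ) = a₀ := by push_cast; ring
      rw [he]
    | succ c ih =>
      obtain ⟨m, hm⟩ := ih
      obtain ⟨m', hm'⟩ := hgrow m
      refine ⟨m', ?_⟩
      have hstep2 : ((a₀ + c : ℤ) : WithTop ℤ) + 1 ≤ lOrd (sq m jst) + 1 :=
        add_le_add hm le_rfl
      have hc1 : ((a₀ + ((c + 1 : ℕ) : ℤ) : ℤ) : WithTop ℤ)
          = ((a₀ + c : ℤ) : WithTop ℤ) + 1 := by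
        have he : (a₀ + ((c + 1 : ℕ) : ℤ) : ℤ) = (a₀ + c) + 1 := by push_cast; ring
        rw [he, WithTop.coe_add, WithTop.coe_one]
      calc ((a₀ + ((c + 1 : ℕ) : ℤ) : ℤ) : WithTop ℤ)
          = ((a₀ + c : ℤ) : WithTop ℤ) + 1 := hc1
        _ ≤ lOrd (sq m jst) + 1 := hstep2
        _ ≤ lOrd (sq m' jst) := hm'
  have hunb : ∀ t : ℤ, ∃ m, (t : WithTop ℤ) ≤ lOrd (sq m jst) := by
    intro t
    obtain ⟨m, hm⟩ := hgrowth ((t - a₀).toNat)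
    refine ⟨m, le_trans ?_ hm⟩
    have h1 : t ≤ a₀ + ((t - a₀).toNat : ℤ) := by
      have := Int.self_le_toNat (t - a₀)
      omega
    exact_mod_cast h1
  -- apply the extraction
  obtain ⟨k₀, hk₀⟩ := exists_k0 δ' (muB B)
  obtain ⟨z, hzI, hzjst, hzflr, hzi⟩ := extraction D B δ' i jst k₀ hk₀ sq
    (fun m => (hsqP m).1) (fun m j => (hsqP m).2.1 j)
    (fun m => by rw [(hsqP m).2.2, hδ'i]) (by rw [hδ'i]; exact hitop) hunb
  -- recurse on the smaller support set
  refine absurd (IH (W.erase jst) (Finset.erase_ssubset hjstW) z hzI ?_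
    (by rw [hzi, hδ'i])) hP
  intro j
  by_cases hj : j ∈ W.erase jst ∨ j = i
  · rw [if_pos hj]
    have hδj : δ' j = δ j := by
      show (if j ∈ W ∨ j = i then δ j else ⊤) = δ j
      rw [if_pos]
      rcases hj with hj | hj
      · exact Or.inl (Finset.mem_of_mem_erase hj)
      · exact Or.inr hj
    rw [← hδj]
    exact hzflr j
  · rw [if_neg hj]
    push_neg at hj
    by_cases hjj : j = jst
    · rw [hjj, hzjst]
      simp
    · have hjW : j ∉ W := by
        intro hjW
        exact hj.1 (Finset.mem_erase.2 ⟨hjj, hjW⟩)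
      have hδj : δ' j = ⊤ := by
        show (if j ∈ W ∨ j = i then δ j else ⊤) = ⊤
        rw [if_neg (by push_neg; exact ⟨hjW, hj.2⟩)]
      rw [← hδj]
      exact hzflr j

end SB8
/-- Corollary 3.6. If `(H, G)` is a Standard Basis for a
fractional ideal `I` of `O`, then `v(H)` generates `v(I)` as a `Γ`-semimodule:
for every nonzero `f ∈ I` there are `s ≥ 1`, `γ_1, …, γ_s ∈ Γ` and
`h_1, …, h_s ∈ H` with `v(f) = inf_j (γ_j + v(h_j))`. In particular `v(I)` is a
finitely generated `Γ`-semimodule. -/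
theorem statement8 {K : Type*} [Field K] [IsAlgClosed K] {r n : ℕ} (hr : 1 ≤ r)
    (D : CurveData K r n) (G H : Finset (Fin r → LaurentSeries K))
    (I : Set (Fin r → LaurentSeries K)) (hI : D.IsFracIdeal I)
    (hSB : IsSB D G H I)
    (f : Fin r → LaurentSeries K) (hf : f ∈ I) (hf0 : f ≠ 0) :
    ∃ (s : ℕ) (γ : Fin (s + 1) → Fin r → WithTop ℤ)
      (h : Fin (s + 1) → Fin r → LaurentSeries K),
      (∀ j, γ j ∈ D.Gamma) ∧ (∀ j, h j ∈ H) ∧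
      ∀ i, lOrd (f i) =
        Finset.univ.inf' Finset.univ_nonempty (fun j => γ j i + lOrd (h j i)) := by
  classical
  obtain ⟨⟨B, hBeq⟩, -⟩ := hI
  obtain ⟨hG, hHsub, hredI⟩ := hSB
  have hIset : I = SB8.ISet D B := hBeq
  have hHI : ∀ h' ∈ H, h' ∈ SB8.ISub D B := by
    intro h' hh'
    have h1 := hHsub (Finset.mem_coe.2 hh')
    have h2 : h' ∈ I := h1.1
    rw [hIset] at h2
    exact h2
  have hred' : ∀ f' ∈ SB8.ISet D B, f' ≠ 0 → ∃ f'', IsRed G H f' f'' := by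
    intro f' hf' hne
    exact hredI f' (by rw [hIset]; exact hf') hne
  have hfI : f ∈ SB8.ISub D B := by
    have := hf
    rw [hIset] at this
    exact this
  have hpair : ∀ i : Fin r, lOrd (f i) ≠ ⊤ → SB8.IsPair D H (vv f) i := by
    intro i hi
    refine SB8.main_pair D G H B hG hHI hred' (vv f) i hi
      (Finset.univ.filter (fun j => lOrd (f j) ≠ ⊤)) f hfI ?_ rfl
    intro j
    by_cases hj : lOrd (f j) ≠ ⊤
    · have hcond : j ∈ Finset.univ.filter (fun j' => lOrd (f j') ≠ ⊤) ∨ j = i :=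
        Or.inl (Finset.mem_filter.2 ⟨Finset.mem_univ _, hj⟩)
      rw [if_pos hcond]
      exact le_rfl
    · push_neg at hj
      rw [hj]
      exact le_top
  obtain ⟨i₀, hi₀⟩ : ∃ i₀, lOrd (f i₀) ≠ ⊤ := by
    by_contra hall
    push_neg at hall
    apply hf0
    funext j
    exact SB8.lOrd_eq_top_iff.1 (hall j)
  have hpair' : ∀ i : Fin r, ∃ γ h', γ ∈ D.Gamma ∧ h' ∈ H ∧
      (∀ j, vv f j ≤ γ j + lOrd (h' j)) ∧
      (lOrd (f i) ≠ ⊤ → γ i + lOrd (h' i) = vv f i) := by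
    intro i
    by_cases hi : lOrd (f i) ≠ ⊤
    · obtain ⟨γ, h', h1, h2, h3, h4⟩ := hpair i hi
      exact ⟨γ, h', h1, h2, h3, fun _ => h4⟩
    · obtain ⟨γ, h', h1, h2, h3, _⟩ := hpair i₀ hi₀
      exact ⟨γ, h', h1, h2, h3, fun hodd => absurd hodd hi⟩
  choose γf hfun hspec using hpair'
  have hreq : r - 1 + 1 = r := Nat.succ_pred_eq_of_pos hr
  refine ⟨r - 1, fun j => γf (finCongr hreq j), fun j => hfun (finCongr hreq j),
    fun j => (hspec _).1, fun j => (hspec _).2.1, ?_⟩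
  intro i
  refine le_antisymm ?_ ?_
  · refine Finset.le_inf' _ _ fun j _ => ?_
    exact (hspec (finCongr hreq j)).2.2.1 i
  · by_cases hi : lOrd (f i) ≠ ⊤
    · refine le_trans (Finset.inf'_le _ (Finset.mem_univ ((finCongr hreq).symm i))) ?_
      simp only [Equiv.apply_symm_apply]
      exact le_of_eq ((hspec i).2.2.2 hi)
    · push_neg at hi
      rw [hi]
      exact le_top
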